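/- Let q ≥ 2 be an integer and let f : ℕ → ℂ be a q-automatic function. Then there exists a positive integer k₀ = k₀(f) with the following property: for every i ≥ 1 and every 0 ≤ r ≤ q^i − 1, if f(q^i n + r) = 0 for all integers n with 1 ≤ n ≤ k₀, then f(q^i n + r) = 0 for all integers n ≥ 1. -/

import Mathlib

/-- The `q`-kernel of `f`: the set of sequences `n ↦ f (q^i n + r)` over integers
`i ≥ 1` and `0 ≤ r ≤ q^i - 1`. -/
def qKernel (q : ℕ) (f : ℕ → ℂ) : Set (ℕ → ℂ) :=
  {g | ∃ i r : ℕ, 1 ≤ i ∧ r ≤ q ^ i - 1 ∧ g = fun n => f (q ^ i * n + r)}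

/-- `f` is `q`-automatic if its `q`-kernel is finite. -/
def IsQAutomatic (q : ℕ) (f : ℕ → ℂ) : Prop := (qKernel q f).Finite

theorem stmt_4 (q : ℕ) (hq : 2 ≤ q) (f : ℕ → ℂ)
    (hauto : IsQAutomatic q f) :
    ∃ k₀ : ℕ, 0 < k₀ ∧
      ∀ i r : ℕ, 1 ≤ i → r ≤ q ^ i - 1 →
        (∀ n : ℕ, 1 ≤ n → n ≤ k₀ → f (q ^ i * n + r) = 0) →
        ∀ n : ℕ, 1 ≤ n → f (q ^ i * n + r) = 0 := by
  classical
  set w : (ℕ → ℂ) → ℕ := fun g =>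
    if h : ∃ n, 1 ≤ n ∧ g n ≠ 0 then h.choose else 0 with hw
  refine ⟨hauto.toFinset.sup w + 1, Nat.succ_pos _, ?_⟩
  intro i r hi hr hzero n hn
  set g : ℕ → ℂ := fun n => f (q ^ i * n + r) with hg
  have hmem : g ∈ qKernel q f := ⟨i, r, hi, hr, rfl⟩
  by_cases h : ∃ m, 1 ≤ m ∧ g m ≠ 0
  · exfalso
    obtain ⟨hm1, hm2⟩ := h.choose_spec
    have hwg : w g = h.choose := by simp [hw, h]
    have hle : w g ≤ hauto.toFinset.sup w :=
      Finset.le_sup ((Set.Finite.mem_toFinset hauto).2 hmem)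
    exact hm2 (hzero h.choose hm1 (by omega))
  · push_neg at h
    exact h n hn
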